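/- For every p in the open interval (1/2, 1) there exists a constant C > 0, depending only on p, such that for all real numbers x and y with 0 < y < x, one has (x - y)^2 ≤ C · (x^{2p} - y^{2p})(x^{2-2p} - y^{2-2p}). -/

import Mathlib

/-- From the proof of Lemma 3.6: for `p ∈ (1/2,1)` there is `C > 0` depending only on
`p` such that for `0 < y < x`, `(x - y)^2 ≤ C (x^(2p) - y^(2p))(x^(2-2p) - y^(2-2p))`. -/
theorem stmt_8 (p : ℝ) (hp : p ∈ Set.Ioo (1 / 2 : ℝ) 1) :
    ∃ C : ℝ, 0 < C ∧ ∀ x y : ℝ, 0 < y → y < x →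
      (x - y) ^ 2 ≤
        C * ((x ^ (2 * p) - y ^ (2 * p)) * (x ^ (2 - 2 * p) - y ^ (2 - 2 * p))) := by
  obtain ⟨hp1, hp2⟩ := hp
  set b : ℝ := 2 - 2 * p with hb
  have hb0 : 0 < b := by simp [hb]; linarith
  have hb1 : b < 1 := by simp [hb]; linarith
  refine ⟨b⁻¹, by positivity, fun x y hy hyx => ?_⟩
  have hx : 0 < x := hy.trans hyx
  -- t := y / x
  set t : ℝ := y / x with ht
  have ht0 : 0 < t := by positivity
  have ht1 : t < 1 := (div_lt_one hx).2 hyx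
  -- A := x^(2p) - y^(2p) ≥ x^(2p-1) * (x - y)
  have hyb : y ^ (2 * p) ≤ x ^ (2 * p - 1) * y := by
    have h1 : y ^ (2 * p - 1) ≤ x ^ (2 * p - 1) :=
      Real.rpow_le_rpow hy.le hyx.le (by linarith)
    calc y ^ (2 * p) = y ^ (2 * p - 1) * y := by
          rw [← Real.rpow_add_one hy.ne' (2 * p - 1)]; ring_nf
      _ ≤ x ^ (2 * p - 1) * y := by nlinarith
  have hA : x ^ (2 * p - 1) * (x - y) ≤ x ^ (2 * p) - y ^ (2 * p) := by
    have hxx : x ^ (2 * p - 1) * x = x ^ (2 * p) := by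
      rw [← Real.rpow_add_one hx.ne' (2 * p - 1)]; ring_nf
    nlinarith
  -- B := x^b - y^b ≥ b * x^(b-1) * (x - y), via Bernoulli: t^b ≤ 1 + b*(t-1)
  have hbern : t ^ b ≤ 1 + b * (t - 1) := by
    have := rpow_one_add_le_one_add_mul_self (s := t - 1) (by linarith) hb0.le hb1.le
    simpa using this
  have htb : t ^ b = y ^ b / x ^ b := Real.div_rpow hy.le hx.le b
  have hxbpos : (0:ℝ) < x ^ b := Real.rpow_pos_of_pos hx b
  have hB : b * x ^ (b - 1) * (x - y) ≤ x ^ b - y ^ b := by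
    have h2 : y ^ b ≤ x ^ b * (1 + b * (t - 1)) := by
      rw [htb] at hbern
      calc y ^ b = x ^ b * (y ^ b / x ^ b) := by field_simp
        _ ≤ x ^ b * (1 + b * (t - 1)) := by
            exact mul_le_mul_of_nonneg_left hbern hxbpos.le
    have hxb1 : x ^ (b - 1) * x = x ^ b := by
      rw [← Real.rpow_add_one hx.ne' (b - 1)]; ring_nf
    have hxb1y : x ^ (b - 1) * y = x ^ b * t := by
      rw [ht]; field_simp; rw [← hxb1]
    nlinarith
  -- combine
  have hApos : 0 < x ^ (2 * p - 1) * (x - y) := by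
    have := Real.rpow_pos_of_pos hx (2 * p - 1); nlinarith
  have hBpos : 0 < b * x ^ (b - 1) * (x - y) :=
    mul_pos (mul_pos hb0 (Real.rpow_pos_of_pos hx (b - 1))) (by linarith)
  have hprod : (x ^ (2 * p - 1) * (x - y)) * (b * x ^ (b - 1) * (x - y)) ≤
      (x ^ (2 * p) - y ^ (2 * p)) * (x ^ b - y ^ b) :=
    mul_le_mul hA hB hBpos.le (by linarith)
  have hpow : x ^ (2 * p - 1) * x ^ (b - 1) = 1 := by
    rw [← Real.rpow_add hx]
    have : 2 * p - 1 + (b - 1) = 0 := by simp [hb]; ring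
    rw [this, Real.rpow_zero]
  have key : b * (x - y) ^ 2 ≤ (x ^ (2 * p) - y ^ (2 * p)) * (x ^ b - y ^ b) := by
    calc b * (x - y) ^ 2 = (x ^ (2 * p - 1) * (x - y)) * (b * x ^ (b - 1) * (x - y)) := by
          rw [show (x ^ (2 * p - 1) * (x - y)) * (b * x ^ (b - 1) * (x - y))
              = (x ^ (2 * p - 1) * x ^ (b - 1)) * (b * (x - y) ^ 2) by ring, hpow]; ring
      _ ≤ _ := hprod
  rw [← mul_le_mul_iff_right₀ hb0]
  calc b * (x - y) ^ 2 ≤ (x ^ (2 * p) - y ^ (2 * p)) * (x ^ b - y ^ b) := key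
    _ = b * (b⁻¹ * ((x ^ (2 * p) - y ^ (2 * p)) * (x ^ (2 - 2 * p) - y ^ (2 - 2 * p)))) := by
        rw [hb]; field_simp
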